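/- arXiv:2409.01987 — 4 statements merged into one kernel-verified Lean document; each statement's English description precedes it below -/
import Mathlib

section
/- For Hermitian operators A0, A1, B0, B1 on a finite-dimensional complex Hilbert space with A0²=A1²=B0²=B1²=I, and A's commuting with B's, the operator identity ((A0+A1)/√2 − B0)² + ((A0−A1)/√2 − B1)² = 4·I − √2·(A0B0 + A0B1 + A1B0 − A1B1) holds. -/
/-- Sum-of-squares decomposition of the CHSH operator. -/
theorem stmt_0 {H : Type*} [NormedAddCommGroup H] [InnerProductSpace ℂ H]
    [FiniteDimensional ℂ H]
    (A0 A1 B0 B1 : H →ₗ[ℂ] H)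
    (hA0 : A0.IsSymmetric) (hA1 : A1.IsSymmetric)
    (hB0 : B0.IsSymmetric) (hB1 : B1.IsSymmetric)
    (hA0sq : A0 ^ 2 = 1) (hA1sq : A1 ^ 2 = 1) (hB0sq : B0 ^ 2 = 1) (hB1sq : B1 ^ 2 = 1)
    (h00 : Commute A0 B0) (h01 : Commute A0 B1) (h10 : Commute A1 B0) (h11 : Commute A1 B1) :
    ((Real.sqrt 2 : ℂ)⁻¹ • (A0 + A1) - B0) ^ 2 + ((Real.sqrt 2 : ℂ)⁻¹ • (A0 - A1) - B1) ^ 2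
      = (4 : ℂ) • (1 : H →ₗ[ℂ] H)
        - (Real.sqrt 2 : ℂ) • (A0 * B0 + A0 * B1 + A1 * B0 - A1 * B1) := by
  have hs : (Real.sqrt 2 : ℂ) ≠ 0 := by
    simp [Complex.ofReal_ne_zero, Real.sqrt_eq_zero']
  have hs2 : (Real.sqrt 2 : ℂ) * (Real.sqrt 2 : ℂ) = 2 := by
    have := Real.mul_self_sqrt (by norm_num : (0:ℝ) ≤ 2)
    exact_mod_cast this
  have hinv : ((Real.sqrt 2 : ℂ)⁻¹) * ((Real.sqrt 2 : ℂ)⁻¹) = 2⁻¹ := by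
    rw [← mul_inv, hs2]
  simp only [sub_sq', add_sq', sq, mul_add, add_mul, mul_sub, sub_mul, smul_mul_assoc,
    mul_smul_comm, one_mul, mul_one, smul_smul, hinv,
    ← h00.eq, ← h01.eq, ← h10.eq, ← h11.eq]
  rw [← sq, ← sq, ← sq, ← sq, hA0sq, hA1sq, hB0sq, hB1sq]
  match_scalars <;> field_simp <;> (rw [sq, hs2]; ring)
end

section
/- Suppose operators Xk, Zk for k = 1,…,9 act on a Hilbert space with distinct-site operators commuting, Xk² = Zk² = I for k ∈ {2,3,5,6,8,9}, and {Xk, Zk} = 0 for k ∈ {1,4,7}. If a vector ψ satisfies S̃iψ = ψ for all nine operators S̃1=Z1Z2, S̃2=Z1Z3, S̃3=Z4Z5, S̃4=Z4Z6, S̃5=Z7Z8, S̃6=Z7Z9, S̃7=X1X2X3X4X5X6, S̃8=X1X2X3X7X8X9, S̃9=X4X5X6X7X8X9, and each Xk, Zk is Hermitian, then Xk²ψ = Zk²ψ = ψ and {Xk, Zk}ψ = 0 for all k = 1,…,9. -/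
/-- Algebraic core of self-testing Shor's `[[9,1,3]]` code: the nine (substituted)
stabilizer conditions, with anticommutation at sites 1, 4, 7 and squaring relations at the
remaining sites, imply `Xₖ²ψ = Zₖ²ψ = ψ` and `{Xₖ,Zₖ}ψ = 0` for all `k = 1,…,9`. -/
theorem stmt_8 {H : Type*} [NormedAddCommGroup H] [InnerProductSpace ℂ H]
    [FiniteDimensional ℂ H]
    (X Z : Fin 9 → (H →ₗ[ℂ] H))
    (hherm : ∀ k, (X k).IsSymmetric ∧ (Z k).IsSymmetric)
    (hcomm : ∀ i j, i ≠ j →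
      Commute (X i) (X j) ∧ Commute (Z i) (Z j) ∧ Commute (X i) (Z j))
    (hsq : ∀ k, k ∈ ({1, 2, 4, 5, 7, 8} : Set (Fin 9)) → (X k) ^ 2 = 1 ∧ (Z k) ^ 2 = 1)
    (hac : ∀ k, k ∈ ({0, 3, 6} : Set (Fin 9)) → X k * Z k + Z k * X k = 0)
    (ψ : H)
    (hS1 : (Z 0 * Z 1) ψ = ψ)
    (hS2 : (Z 0 * Z 2) ψ = ψ)
    (hS3 : (Z 3 * Z 4) ψ = ψ)
    (hS4 : (Z 3 * Z 5) ψ = ψ)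
    (hS5 : (Z 6 * Z 7) ψ = ψ)
    (hS6 : (Z 6 * Z 8) ψ = ψ)
    (hS7 : (X 0 * X 1 * X 2 * X 3 * X 4 * X 5) ψ = ψ)
    (hS8 : (X 0 * X 1 * X 2 * X 6 * X 7 * X 8) ψ = ψ)
    (hS9 : (X 3 * X 4 * X 5 * X 6 * X 7 * X 8) ψ = ψ) :
    ∀ k, ((X k) ^ 2) ψ = ψ ∧ ((Z k) ^ 2) ψ = ψ ∧ (X k * Z k + Z k * X k) ψ = 0 := by
  -- pointwise commuting helpers
  have hXX : ∀ i j, i ≠ j → ∀ v, X i (X j v) = X j (X i v) := fun i j h v =>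
    LinearMap.congr_fun (hcomm i j h).1.eq v
  have hZZ : ∀ i j, i ≠ j → ∀ v, Z i (Z j v) = Z j (Z i v) := fun i j h v =>
    LinearMap.congr_fun (hcomm i j h).2.1.eq v
  have hXZ : ∀ i j, i ≠ j → ∀ v, X i (Z j v) = Z j (X i v) := fun i j h v =>
    LinearMap.congr_fun (hcomm i j h).2.2.eq v
  have hZX : ∀ i j, i ≠ j → ∀ v, Z i (X j v) = X j (Z i v) := fun i j h v =>
    (hXZ j i h.symm v).symm
  -- membership facts
  have m1 : (1 : Fin 9) ∈ ({1, 2, 4, 5, 7, 8} : Set (Fin 9)) := by simp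
  have m2 : (2 : Fin 9) ∈ ({1, 2, 4, 5, 7, 8} : Set (Fin 9)) := by simp
  have m4 : (4 : Fin 9) ∈ ({1, 2, 4, 5, 7, 8} : Set (Fin 9)) := by simp
  have m5 : (5 : Fin 9) ∈ ({1, 2, 4, 5, 7, 8} : Set (Fin 9)) := by simp
  have m7 : (7 : Fin 9) ∈ ({1, 2, 4, 5, 7, 8} : Set (Fin 9)) := by simp
  have m8 : (8 : Fin 9) ∈ ({1, 2, 4, 5, 7, 8} : Set (Fin 9)) := by simp
  have b0 : (0 : Fin 9) ∈ ({0, 3, 6} : Set (Fin 9)) := by simp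
  have b3 : (3 : Fin 9) ∈ ({0, 3, 6} : Set (Fin 9)) := by simp
  have b6 : (6 : Fin 9) ∈ ({0, 3, 6} : Set (Fin 9)) := by simp
  -- pointwise squares at good sites
  have hXs : ∀ k, k ∈ ({1, 2, 4, 5, 7, 8} : Set (Fin 9)) → ∀ v, X k (X k v) = v := by
    intro k hk v
    have h := LinearMap.congr_fun (hsq k hk).1 v
    rw [pow_two] at h
    exact h
  have hZs : ∀ k, k ∈ ({1, 2, 4, 5, 7, 8} : Set (Fin 9)) → ∀ v, Z k (Z k v) = v := by
    intro k hk v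
    have h := LinearMap.congr_fun (hsq k hk).2 v
    rw [pow_two] at h
    exact h
  -- pointwise anticommutation at bad sites
  have hACp : ∀ k, k ∈ ({0, 3, 6} : Set (Fin 9)) → ∀ v, Z k (X k v) = - X k (Z k v) := by
    intro k hk v
    have h := LinearMap.congr_fun (hac k hk) v
    simp only [LinearMap.add_apply, Module.End.mul_apply, LinearMap.zero_apply] at h
    rw [add_comm] at h
    exact eq_neg_of_add_eq_zero_left h
  simp only [Module.End.mul_apply] at hS1 hS2 hS3 hS4 hS5 hS6 hS7 hS8 hS9
  -- Z squares at bad sites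
  have hZ0 : Z 0 (Z 0 ψ) = ψ := by
    have h : Z 0 (Z 1 (Z 0 (Z 1 ψ))) = ψ := by rw [hS1]; exact hS1
    rw [hZZ 1 0 (by decide), hZs 1 m1] at h
    exact h
  have hZ3 : Z 3 (Z 3 ψ) = ψ := by
    have h : Z 3 (Z 4 (Z 3 (Z 4 ψ))) = ψ := by rw [hS3]; exact hS3
    rw [hZZ 4 3 (by decide), hZs 4 m4] at h
    exact h
  have hZ6 : Z 6 (Z 6 ψ) = ψ := by
    have h : Z 6 (Z 7 (Z 6 (Z 7 ψ))) = ψ := by rw [hS5]; exact hS5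
    rw [hZZ 7 6 (by decide), hZs 7 m7] at h
    exact h
  -- good-site Z action on ψ
  have hZ1e : Z 1 ψ = Z 0 ψ := by
    have h := congrArg (Z 0) hS1
    rw [hZZ 0 1 (by decide), hZZ 0 1 (by decide), hZ0] at h
    exact h
  have hZ2e : Z 2 ψ = Z 0 ψ := by
    have h := congrArg (Z 0) hS2
    rw [hZZ 0 2 (by decide), hZZ 0 2 (by decide), hZ0] at h
    exact h
  have hZ4e : Z 4 ψ = Z 3 ψ := by
    have h := congrArg (Z 3) hS3
    rw [hZZ 3 4 (by decide), hZZ 3 4 (by decide), hZ3] at h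
    exact h
  have hZ5e : Z 5 ψ = Z 3 ψ := by
    have h := congrArg (Z 3) hS4
    rw [hZZ 3 5 (by decide), hZZ 3 5 (by decide), hZ3] at h
    exact h
  have hZ7e : Z 7 ψ = Z 6 ψ := by
    have h := congrArg (Z 6) hS5
    rw [hZZ 6 7 (by decide), hZZ 6 7 (by decide), hZ6] at h
    exact h
  have hZ8e : Z 8 ψ = Z 6 ψ := by
    have h := congrArg (Z 6) hS6
    rw [hZZ 6 8 (by decide), hZZ 6 8 (by decide), hZ6] at h
    exact h
  -- X squares at bad sites
  have hX0 : X 0 (X 0 ψ) = ψ := by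
    have h : X 0 (X 1 (X 2 (X 3 (X 4 (X 5 (X 0 (X 1 (X 2 (X 6 (X 7 (X 8 ψ))))))))))) = ψ := by
      rw [hS8]; exact hS7
    rw [hXX 5 0 (by decide), hXX 4 0 (by decide), hXX 3 0 (by decide), hXX 2 0 (by decide),
        hXX 1 0 (by decide), hXX 5 1 (by decide), hXX 4 1 (by decide), hXX 3 1 (by decide),
        hXX 2 1 (by decide), hXs 1 m1, hXX 5 2 (by decide), hXX 4 2 (by decide),
        hXX 3 2 (by decide), hXs 2 m2, hS9] at h
    exact h
  have hX3 : X 3 (X 3 ψ) = ψ := by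
    have h : X 0 (X 1 (X 2 (X 3 (X 4 (X 5 (X 3 (X 4 (X 5 (X 6 (X 7 (X 8 ψ))))))))))) = ψ := by
      rw [hS9]; exact hS7
    rw [hXX 5 3 (by decide), hXX 4 3 (by decide), hXX 5 4 (by decide), hXs 4 m4, hXs 5 m5,
        hXX 2 3 (by decide), hXX 2 3 (by decide), hXX 1 3 (by decide), hXX 1 3 (by decide),
        hXX 0 3 (by decide), hXX 0 3 (by decide), hS8] at h
    exact h
  have hX6 : X 6 (X 6 ψ) = ψ := by
    have h : X 0 (X 1 (X 2 (X 6 (X 7 (X 8 (X 3 (X 4 (X 5 (X 6 (X 7 (X 8 ψ))))))))))) = ψ := by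
      rw [hS9]; exact hS8
    rw [hXX 5 6 (by decide), hXX 4 6 (by decide), hXX 3 6 (by decide), hXX 8 6 (by decide),
        hXX 7 6 (by decide), hXX 5 7 (by decide), hXX 4 7 (by decide), hXX 3 7 (by decide),
        hXX 8 7 (by decide), hXs 7 m7, hXX 5 8 (by decide), hXX 4 8 (by decide),
        hXX 3 8 (by decide), hXs 8 m8, hXX 2 6 (by decide), hXX 2 6 (by decide),
        hXX 1 6 (by decide), hXX 1 6 (by decide), hXX 0 6 (by decide), hXX 0 6 (by decide),
        hS7] at h
    exact h
  -- good-site X action on ψ (bad-site factor pulled to the front)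
  have hX1e : X 1 ψ = X 0 (X 2 (X 3 (X 4 (X 5 ψ)))) := by
    have h := congrArg (X 1) hS7
    rw [hXX 1 0 (by decide), hXs 1 m1] at h
    exact h.symm
  have hX2e : X 2 ψ = X 0 (X 1 (X 3 (X 4 (X 5 ψ)))) := by
    have h := congrArg (X 2) hS7
    rw [hXX 2 0 (by decide), hXX 2 1 (by decide), hXs 2 m2] at h
    exact h.symm
  have hX4e : X 4 ψ = X 3 (X 0 (X 1 (X 2 (X 5 ψ)))) := by
    have h := congrArg (X 4) hS7
    rw [hXX 4 0 (by decide), hXX 4 1 (by decide), hXX 4 2 (by decide), hXX 4 3 (by decide),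
        hXs 4 m4, hXX 2 3 (by decide), hXX 1 3 (by decide), hXX 0 3 (by decide)] at h
    exact h.symm
  have hX5e : X 5 ψ = X 3 (X 0 (X 1 (X 2 (X 4 ψ)))) := by
    have h := congrArg (X 5) hS7
    rw [hXX 5 0 (by decide), hXX 5 1 (by decide), hXX 5 2 (by decide), hXX 5 3 (by decide),
        hXX 5 4 (by decide), hXs 5 m5, hXX 2 3 (by decide), hXX 1 3 (by decide),
        hXX 0 3 (by decide)] at h
    exact h.symm
  have hX7e : X 7 ψ = X 6 (X 0 (X 1 (X 2 (X 8 ψ)))) := by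
    have h := congrArg (X 7) hS8
    rw [hXX 7 0 (by decide), hXX 7 1 (by decide), hXX 7 2 (by decide), hXX 7 6 (by decide),
        hXs 7 m7, hXX 2 6 (by decide), hXX 1 6 (by decide), hXX 0 6 (by decide)] at h
    exact h.symm
  have hX8e : X 8 ψ = X 6 (X 0 (X 1 (X 2 (X 7 ψ)))) := by
    have h := congrArg (X 8) hS8
    rw [hXX 8 0 (by decide), hXX 8 1 (by decide), hXX 8 2 (by decide), hXX 8 6 (by decide),
        hXX 8 7 (by decide), hXs 8 m8, hXX 2 6 (by decide), hXX 1 6 (by decide),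
        hXX 0 6 (by decide)] at h
    exact h.symm
  -- anticommutator on ψ at good sites
  have hA1 : X 1 (Z 1 ψ) + Z 1 (X 1 ψ) = 0 := by
    rw [hZ1e, hXZ 1 0 (by decide), hX1e, hACp 0 b0,
        hZX 0 2 (by decide), hZX 0 3 (by decide), hZX 0 4 (by decide), hZX 0 5 (by decide),
        hZX 1 0 (by decide), hZX 1 2 (by decide), hZX 1 3 (by decide), hZX 1 4 (by decide),
        hZX 1 5 (by decide), hZ1e]
    exact neg_add_cancel _
  have hA2 : X 2 (Z 2 ψ) + Z 2 (X 2 ψ) = 0 := by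
    rw [hZ2e, hXZ 2 0 (by decide), hX2e, hACp 0 b0,
        hZX 0 1 (by decide), hZX 0 3 (by decide), hZX 0 4 (by decide), hZX 0 5 (by decide),
        hZX 2 0 (by decide), hZX 2 1 (by decide), hZX 2 3 (by decide), hZX 2 4 (by decide),
        hZX 2 5 (by decide), hZ2e]
    exact neg_add_cancel _
  have hA4 : X 4 (Z 4 ψ) + Z 4 (X 4 ψ) = 0 := by
    rw [hZ4e, hXZ 4 3 (by decide), hX4e, hACp 3 b3,
        hZX 3 0 (by decide), hZX 3 1 (by decide), hZX 3 2 (by decide), hZX 3 5 (by decide),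
        hZX 4 3 (by decide), hZX 4 0 (by decide), hZX 4 1 (by decide), hZX 4 2 (by decide),
        hZX 4 5 (by decide), hZ4e]
    exact neg_add_cancel _
  have hA5 : X 5 (Z 5 ψ) + Z 5 (X 5 ψ) = 0 := by
    rw [hZ5e, hXZ 5 3 (by decide), hX5e, hACp 3 b3,
        hZX 3 0 (by decide), hZX 3 1 (by decide), hZX 3 2 (by decide), hZX 3 4 (by decide),
        hZX 5 3 (by decide), hZX 5 0 (by decide), hZX 5 1 (by decide), hZX 5 2 (by decide),
        hZX 5 4 (by decide), hZ5e]
    exact neg_add_cancel _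
  have hA7 : X 7 (Z 7 ψ) + Z 7 (X 7 ψ) = 0 := by
    rw [hZ7e, hXZ 7 6 (by decide), hX7e, hACp 6 b6,
        hZX 6 0 (by decide), hZX 6 1 (by decide), hZX 6 2 (by decide), hZX 6 8 (by decide),
        hZX 7 6 (by decide), hZX 7 0 (by decide), hZX 7 1 (by decide), hZX 7 2 (by decide),
        hZX 7 8 (by decide), hZ7e]
    exact neg_add_cancel _
  have hA8 : X 8 (Z 8 ψ) + Z 8 (X 8 ψ) = 0 := by
    rw [hZ8e, hXZ 8 6 (by decide), hX8e, hACp 6 b6,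
        hZX 6 0 (by decide), hZX 6 1 (by decide), hZX 6 2 (by decide), hZX 6 7 (by decide),
        hZX 8 6 (by decide), hZX 8 0 (by decide), hZX 8 1 (by decide), hZX 8 2 (by decide),
        hZX 8 7 (by decide), hZ8e]
    exact neg_add_cancel _
  intro k
  fin_cases k
  · exact ⟨by rw [pow_two]; exact hX0, by rw [pow_two]; exact hZ0, by show (X 0 * Z 0 + Z 0 * X 0) ψ = 0; rw [hac 0 b0]; simp⟩
  · exact ⟨by rw [pow_two]; exact hXs 1 m1 ψ, by rw [pow_two]; exact hZs 1 m1 ψ,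
      by simp only [LinearMap.add_apply, Module.End.mul_apply]; exact hA1⟩
  · exact ⟨by rw [pow_two]; exact hXs 2 m2 ψ, by rw [pow_two]; exact hZs 2 m2 ψ,
      by simp only [LinearMap.add_apply, Module.End.mul_apply]; exact hA2⟩
  · exact ⟨by rw [pow_two]; exact hX3, by rw [pow_two]; exact hZ3, by show (X 3 * Z 3 + Z 3 * X 3) ψ = 0; rw [hac 3 b3]; simp⟩
  · exact ⟨by rw [pow_two]; exact hXs 4 m4 ψ, by rw [pow_two]; exact hZs 4 m4 ψ,
      by simp only [LinearMap.add_apply, Module.End.mul_apply]; exact hA4⟩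
  · exact ⟨by rw [pow_two]; exact hXs 5 m5 ψ, by rw [pow_two]; exact hZs 5 m5 ψ,
      by simp only [LinearMap.add_apply, Module.End.mul_apply]; exact hA5⟩
  · exact ⟨by rw [pow_two]; exact hX6, by rw [pow_two]; exact hZ6, by show (X 6 * Z 6 + Z 6 * X 6) ψ = 0; rw [hac 6 b6]; simp⟩
  · exact ⟨by rw [pow_two]; exact hXs 7 m7 ψ, by rw [pow_two]; exact hZs 7 m7 ψ,
      by simp only [LinearMap.add_apply, Module.End.mul_apply]; exact hA7⟩
  · exact ⟨by rw [pow_two]; exact hXs 8 m8 ψ, by rw [pow_two]; exact hZs 8 m8 ψ,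
      by simp only [LinearMap.add_apply, Module.End.mul_apply]; exact hA8⟩
end

section
/- (Step of [[9,1,3]] proof) Suppose Hermitian operators satisfy: distinct-site operators commute, Xk²=Zk²=I for k ∈ {2,3,5,6,8,9}, and a vector ψ satisfies X1X2X3X4X5X6 ψ = ψ, X1X2X3X7X8X9 ψ = ψ, X4X5X6X7X8X9 ψ = ψ. Then X1²X4²ψ = X1²X7²ψ = X4²X7²ψ = ψ, and consequently X1⁴ψ = ψ, hence (since X1 is Hermitian) X1²ψ = ψ, and similarly X4²ψ = X7²ψ = ψ. -/
/-- Squaring a product of six pairwise-commuting elements where the four "middle"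
factors square to one. -/
lemma sq_prod6 {M : Type*} [Monoid M] {a p q b r s : M}
    (hc : ∀ x ∈ [a, p, q, b, r, s], ∀ y ∈ [a, p, q, b, r, s], Commute x y)
    (hp : p ^ 2 = 1) (hq : q ^ 2 = 1) (hr : r ^ 2 = 1) (hs : s ^ 2 = 1) :
    (a * p * q * b * r * s) ^ 2 = a ^ 2 * b ^ 2 := by
  have C := hc
  have c1 : Commute (a * p * q * b * r) s :=
    ((((C a (by simp) s (by simp)).mul_left (C p (by simp) s (by simp))).mul_left
      (C q (by simp) s (by simp))).mul_left (C b (by simp) s (by simp))).mul_left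
      (C r (by simp) s (by simp))
  have c2 : Commute (a * p * q * b) r :=
    (((C a (by simp) r (by simp)).mul_left (C p (by simp) r (by simp))).mul_left
      (C q (by simp) r (by simp))).mul_left (C b (by simp) r (by simp))
  have c3 : Commute (a * p * q) b :=
    ((C a (by simp) b (by simp)).mul_left (C p (by simp) b (by simp))).mul_left
      (C q (by simp) b (by simp))
  have c4 : Commute (a * p) q :=
    (C a (by simp) q (by simp)).mul_left (C p (by simp) q (by simp))
  have c5 : Commute a p := C a (by simp) p (by simp)
  rw [c1.mul_pow, c2.mul_pow, c3.mul_pow, c4.mul_pow, c5.mul_pow, hp, hq, hr, hs]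
  simp [mul_one]

/-- Recombination identities for three pairwise-commuting elements. -/
lemma three_keys {M : Type*} [Monoid M] {a b c : M}
    (hab : Commute a b) (hac : Commute a c) (hbc : Commute b c) :
    (a * b) * (a * c) = a ^ 2 * (b * c) ∧ (a * b) * (b * c) = b ^ 2 * (a * c) ∧
      (a * c) * (b * c) = c ^ 2 * (a * b) := by
  refine ⟨?_, ?_, ?_⟩
  · rw [Commute.mul_mul_mul_comm hab.symm, ← sq]
  · rw [hab.eq, Commute.mul_mul_mul_comm hab, ← sq]
  · have hcab : Commute (c ^ 2) (a * b) :=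
      ((hac.symm).mul_right (hbc.symm)).pow_left 2
    rw [Commute.mul_mul_mul_comm hbc.symm, ← sq, ← hcab.eq]

local notation "⟪" x ", " y "⟫" => @inner ℂ _ _ x y

lemma norm_eq_of_inner_self_eq' {H : Type*} [NormedAddCommGroup H] [InnerProductSpace ℂ H]
    {x y : H} (h : ⟪x, x⟫ = ⟪y, y⟫) : ‖x‖ = ‖y‖ := by
  have h2 : ‖x‖ ^ 2 = ‖y‖ ^ 2 := by
    rw [← inner_self_eq_norm_sq (𝕜 := ℂ), ← inner_self_eq_norm_sq (𝕜 := ℂ), h]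
  nlinarith [norm_nonneg x, norm_nonneg y]

/-- If `T` is symmetric and `T⁴ψ = ψ` then `T²ψ = ψ`. -/
lemma sq_of_pow4 {H : Type*} [NormedAddCommGroup H] [InnerProductSpace ℂ H]
    (T : H →ₗ[ℂ] H) (hT : T.IsSymmetric) (ψ : H) (h : (T ^ 4) ψ = ψ) :
    (T ^ 2) ψ = ψ := by
  have happ4 : T (T (T (T ψ))) = ψ := by
    simpa [pow_succ, Module.End.mul_apply] using h
  have hb : ‖T (T ψ)‖ = ‖ψ‖ := by
    refine norm_eq_of_inner_self_eq' ?_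
    rw [hT (T ψ) (T (T ψ)), hT ψ (T (T (T ψ))), happ4]
  have hc : ‖T (T (T ψ))‖ = ‖T ψ‖ := by
    refine norm_eq_of_inner_self_eq' ?_
    rw [hT (T (T ψ)) (T (T (T ψ))), hT (T ψ) (T (T (T (T ψ)))), happ4]
  have hre : RCLike.re ⟪T (T ψ), ψ⟫ = ‖T ψ‖ ^ 2 := by
    rw [hT (T ψ) ψ]
    exact inner_self_eq_norm_sq (𝕜 := ℂ) _
  have hup : ‖T ψ‖ ^ 2 ≤ ‖ψ‖ ^ 2 := by
    calc ‖T ψ‖ ^ 2 = RCLike.re ⟪T (T ψ), ψ⟫ := hre.symm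
      _ ≤ ‖⟪T (T ψ), ψ⟫‖ := RCLike.re_le_norm _
      _ ≤ ‖T (T ψ)‖ * ‖ψ‖ := norm_inner_le_norm _ _
      _ = ‖ψ‖ ^ 2 := by rw [hb]; ring
  have hlow : ‖ψ‖ ^ 2 ≤ ‖T ψ‖ ^ 2 := by
    have e1 : ⟪T (T (T ψ)), T ψ⟫ = ⟪ψ, ψ⟫ := by
      rw [hT (T (T ψ)) (T ψ), hT (T ψ) (T (T ψ)), hT ψ (T (T (T ψ))), happ4]
    calc ‖ψ‖ ^ 2 = RCLike.re ⟪ψ, ψ⟫ := (inner_self_eq_norm_sq (𝕜 := ℂ) _).symm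
      _ = RCLike.re ⟪T (T (T ψ)), T ψ⟫ := by rw [e1]
      _ ≤ ‖⟪T (T (T ψ)), T ψ⟫‖ := RCLike.re_le_norm _
      _ ≤ ‖T (T (T ψ))‖ * ‖T ψ‖ := norm_inner_le_norm _ _
      _ = ‖T ψ‖ ^ 2 := by rw [hc]; ring
  have heq : ‖T ψ‖ ^ 2 = ‖ψ‖ ^ 2 := le_antisymm hup hlow
  have hz : ‖T (T ψ) - ψ‖ ^ 2 = 0 := by
    rw [@norm_sub_sq ℂ _ _ _ _ (T (T ψ)) ψ, hb, hre, heq]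
    ring
  have : T (T ψ) = ψ := by
    have := pow_eq_zero_iff (n := 2) (by norm_num) |>.mp hz
    rwa [norm_eq_zero, sub_eq_zero] at this
  simpa [pow_succ, Module.End.mul_apply] using this

/-- Step of the `[[9,1,3]]` proof: squaring the three `X`-type stabilizer conditions gives
`X₁²X₄²ψ = X₁²X₇²ψ = X₄²X₇²ψ = ψ`, hence `X₁⁴ψ = ψ`, and since `X₁` is Hermitian
`X₁²ψ = ψ`, and similarly `X₄²ψ = X₇²ψ = ψ`. -/
theorem stmt_9 {H : Type*} [NormedAddCommGroup H] [InnerProductSpace ℂ H]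
    [FiniteDimensional ℂ H]
    (X : Fin 9 → (H →ₗ[ℂ] H))
    (hherm : ∀ k, (X k).IsSymmetric)
    (hcomm : ∀ i j, i ≠ j → Commute (X i) (X j))
    (hsq : ∀ k, k ∈ ({1, 2, 4, 5, 7, 8} : Set (Fin 9)) → (X k) ^ 2 = 1)
    (ψ : H)
    (hS7 : (X 0 * X 1 * X 2 * X 3 * X 4 * X 5) ψ = ψ)
    (hS8 : (X 0 * X 1 * X 2 * X 6 * X 7 * X 8) ψ = ψ)
    (hS9 : (X 3 * X 4 * X 5 * X 6 * X 7 * X 8) ψ = ψ) :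
    ((X 0) ^ 2 * (X 3) ^ 2) ψ = ψ ∧ ((X 0) ^ 2 * (X 6) ^ 2) ψ = ψ ∧
      ((X 3) ^ 2 * (X 6) ^ 2) ψ = ψ ∧ ((X 0) ^ 4) ψ = ψ ∧
      ((X 0) ^ 2) ψ = ψ ∧ ((X 3) ^ 2) ψ = ψ ∧ ((X 6) ^ 2) ψ = ψ := by
  have C : ∀ i j : Fin 9, Commute (X i) (X j) := by
    intro i j
    by_cases h : i = j
    · subst h; exact Commute.refl _
    · exact hcomm i j h
  have hcl : ∀ (l : List (Fin 9)), ∀ x ∈ l.map X, ∀ y ∈ l.map X, Commute x y := by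
    intro l x hx y hy
    simp only [List.mem_map] at hx hy
    obtain ⟨i, _, rfl⟩ := hx
    obtain ⟨j, _, rfl⟩ := hy
    exact C i j
  -- squared stabilizer conditions
  have hA : (X 0 ^ 2 * X 3 ^ 2) ψ = ψ := by
    have h2 : ((X 0 * X 1 * X 2 * X 3 * X 4 * X 5) ^ 2) ψ = ψ := by
      rw [pow_two, Module.End.mul_apply, hS7, hS7]
    rwa [sq_prod6 (hcl [0, 1, 2, 3, 4, 5]) (hsq 1 (by simp)) (hsq 2 (by simp))
      (hsq 4 (by simp)) (hsq 5 (by simp))] at h2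
  have hB : (X 0 ^ 2 * X 6 ^ 2) ψ = ψ := by
    have h2 : ((X 0 * X 1 * X 2 * X 6 * X 7 * X 8) ^ 2) ψ = ψ := by
      rw [pow_two, Module.End.mul_apply, hS8, hS8]
    rwa [sq_prod6 (hcl [0, 1, 2, 6, 7, 8]) (hsq 1 (by simp)) (hsq 2 (by simp))
      (hsq 7 (by simp)) (hsq 8 (by simp))] at h2
  have hC : (X 3 ^ 2 * X 6 ^ 2) ψ = ψ := by
    have h2 : ((X 3 * X 4 * X 5 * X 6 * X 7 * X 8) ^ 2) ψ = ψ := by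
      rw [pow_two, Module.End.mul_apply, hS9, hS9]
    rwa [sq_prod6 (hcl [3, 4, 5, 6, 7, 8]) (hsq 4 (by simp)) (hsq 5 (by simp))
      (hsq 7 (by simp)) (hsq 8 (by simp))] at h2
  obtain ⟨k0, k3, k6⟩ := three_keys ((C 0 3).pow_pow 2 2) ((C 0 6).pow_pow 2 2)
    ((C 3 6).pow_pow 2 2)
  have hpow : (X 0 ^ 2) ^ 2 = X 0 ^ 4 := by rw [← pow_mul]
  have hpow3 : (X 3 ^ 2) ^ 2 = X 3 ^ 4 := by rw [← pow_mul]
  have hpow6 : (X 6 ^ 2) ^ 2 = X 6 ^ 4 := by rw [← pow_mul]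
  -- X₀⁴ψ = ψ
  have h04 : (X 0 ^ 4) ψ = ψ := by
    have e : ((X 0 ^ 2) ^ 2 * (X 3 ^ 2 * X 6 ^ 2)) ψ = ψ := by
      rw [← k0]
      show (X 0 ^ 2 * X 3 ^ 2) ((X 0 ^ 2 * X 6 ^ 2) ψ) = ψ
      rw [hB, hA]
    calc (X 0 ^ 4) ψ = ((X 0 ^ 2) ^ 2 * (X 3 ^ 2 * X 6 ^ 2)) ψ := by
          show _ = ((X 0 ^ 2) ^ 2) ((X 3 ^ 2 * X 6 ^ 2) ψ)
          rw [hC, hpow]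
      _ = ψ := e
  have h34 : (X 3 ^ 4) ψ = ψ := by
    have e : ((X 3 ^ 2) ^ 2 * (X 0 ^ 2 * X 6 ^ 2)) ψ = ψ := by
      rw [← k3]
      show (X 0 ^ 2 * X 3 ^ 2) ((X 3 ^ 2 * X 6 ^ 2) ψ) = ψ
      rw [hC, hA]
    calc (X 3 ^ 4) ψ = ((X 3 ^ 2) ^ 2 * (X 0 ^ 2 * X 6 ^ 2)) ψ := by
          show _ = ((X 3 ^ 2) ^ 2) ((X 0 ^ 2 * X 6 ^ 2) ψ)
          rw [hB, hpow3]
      _ = ψ := e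
  have h64 : (X 6 ^ 4) ψ = ψ := by
    have e : ((X 6 ^ 2) ^ 2 * (X 0 ^ 2 * X 3 ^ 2)) ψ = ψ := by
      rw [← k6]
      show (X 0 ^ 2 * X 6 ^ 2) ((X 3 ^ 2 * X 6 ^ 2) ψ) = ψ
      rw [hC, hB]
    calc (X 6 ^ 4) ψ = ((X 6 ^ 2) ^ 2 * (X 0 ^ 2 * X 3 ^ 2)) ψ := by
          show _ = ((X 6 ^ 2) ^ 2) ((X 0 ^ 2 * X 3 ^ 2) ψ)
          rw [hA, hpow6]
      _ = ψ := e
  exact ⟨hA, hB, hC, h04, sq_of_pow4 (X 0) (hherm 0) ψ h04,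
    sq_of_pow4 (X 3) (hherm 3) ψ h34, sq_of_pow4 (X 6) (hherm 6) ψ h64⟩
end

section
/- Suppose operators Xk, Zk for k = 1,…,7 act on a Hilbert space with distinct-site operators commuting, Xk² = Zk² = I for k ∈ {1,4,6}, and {Xk, Zk} = 0 for k ∈ {2,3,5,7}. If a vector ψ is fixed by the eight operators S̃1=X4X5X6X7, S̃2=X2X3X6X7, S̃3=X1X3X5X7, S̃4=X1X2X5X6, S̃5=Z4Z5Z6Z7, S̃6=Z2Z3Z6Z7, S̃7=Z1Z3Z5Z7, S̃8=Z1Z2Z5Z6, and all Xk, Zk are Hermitian, then Xk²ψ = Zk²ψ = ψ for all k and {Xk, Zk}ψ = 0 for all k = 1,…,7. -/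
section aux
variable {R : Type*} [Ring R]
lemma sort2 (x1 x2 z1 z2 : R) (h12 : Commute z1 x2) :
    (x1 * x2) * (z1 * z2) = (x1 * z1) * (x2 * z2) := by
  have h : x2 * z1 = z1 * x2 := h12.symm.eq
  calc (x1 * x2) * (z1 * z2) = x1 * ((x2 * z1) * z2) := by simp only [mul_assoc]
    _ = x1 * ((z1 * x2) * z2) := by rw [h]
    _ = (x1 * z1) * (x2 * z2) := by simp only [mul_assoc]
lemma sort3 (x1 x2 x3 z1 z2 z3 : R) (h12 : Commute z1 x2) (h13 : Commute z1 x3)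
    (h23 : Commute z2 x3) :
    (x1 * x2 * x3) * (z1 * z2 * z3) = (x1 * z1) * ((x2 * z2) * (x3 * z3)) := by
  have hz1 : (x2 * x3) * z1 = z1 * (x2 * x3) := (h12.mul_right h13).symm.eq
  calc (x1 * x2 * x3) * (z1 * z2 * z3)
      = x1 * (((x2 * x3) * z1) * (z2 * z3)) := by simp only [mul_assoc]
    _ = x1 * ((z1 * (x2 * x3)) * (z2 * z3)) := by rw [hz1]
    _ = (x1 * z1) * ((x2 * x3) * (z2 * z3)) := by simp only [mul_assoc]
    _ = (x1 * z1) * ((x2 * z2) * (x3 * z3)) := by rw [sort2 x2 x3 z2 z3 h23]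
lemma sort4 (x1 x2 x3 x4 z1 z2 z3 z4 : R) (h12 : Commute z1 x2) (h13 : Commute z1 x3)
    (h14 : Commute z1 x4) (h23 : Commute z2 x3) (h24 : Commute z2 x4) (h34 : Commute z3 x4) :
    (x1 * x2 * x3 * x4) * (z1 * z2 * z3 * z4)
      = (x1 * z1) * ((x2 * z2) * ((x3 * z3) * (x4 * z4))) := by
  have hz1 : (x2 * (x3 * x4)) * z1 = z1 * (x2 * (x3 * x4)) :=
    ((h12.mul_right (h13.mul_right h14))).symm.eq
  calc (x1 * x2 * x3 * x4) * (z1 * z2 * z3 * z4)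
      = x1 * (((x2 * (x3 * x4)) * z1) * (z2 * z3 * z4)) := by simp only [mul_assoc]
    _ = x1 * ((z1 * (x2 * (x3 * x4))) * (z2 * z3 * z4)) := by rw [hz1]
    _ = (x1 * z1) * ((x2 * x3 * x4) * (z2 * z3 * z4)) := by simp only [mul_assoc]
    _ = (x1 * z1) * ((x2 * z2) * ((x3 * z3) * (x4 * z4))) := by
        rw [sort3 x2 x3 x4 z2 z3 z4 h23 h24 h34]
end aux

section psd
variable {H : Type*} [NormedAddCommGroup H] [InnerProductSpace ℂ H]
local notation "⟪" x ", " y "⟫" => @inner ℂ _ _ x y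

lemma pushfix (P Q : H →ₗ[ℂ] H) (v : H) (hPQ : Commute P Q) (hPv : P (P v) = v) :
    P (P (Q v)) = Q v := by
  have h2 : Commute (P*P) Q := hPQ.mul_left hPQ
  have h := congrArg (fun f : H →ₗ[ℂ] H => f v) h2.eq
  simp only [Module.End.mul_apply] at h
  rw [h, hPv]

lemma step (M N : H →ₗ[ℂ] H) (hM : M.IsSymmetric) (hN : N.IsSymmetric)
    (hanti : M * N + N * M = 0) (s : H) (hMs : M (M s) = s) (hNs : N (N s) = s) :
    ⟪N (M s), N (M s)⟫ = ⟪s, s⟫ := by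
  have hNM : N * M = -(M * N) := eq_neg_of_add_eq_zero_right hanti
  have h1 : N * (N * M) = M * (N * N) := by
    rw [hNM, mul_neg, ← mul_assoc, hNM]
    simp [mul_assoc]
  have hop : M * (N * (N * M)) = M * (M * (N * N)) := by rw [h1]
  have happ : M (N (N (M s))) = s := by
    have := congrArg (fun f : H →ₗ[ℂ] H => f s) hop
    simp only [Module.End.mul_apply] at this
    rw [this, hNs, hMs]
  calc ⟪N (M s), N (M s)⟫ = ⟪M s, N (N (M s))⟫ := hN _ _
    _ = ⟪s, M (N (N (M s)))⟫ := hM _ _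
    _ = ⟪s, s⟫ := by rw [happ]

lemma psd_fix (M : H →ₗ[ℂ] H) (hM : M.IsSymmetric) (ψ : H)
    (h4 : M (M (M (M ψ))) = ψ) : M (M ψ) = ψ := by
  set v := M (M ψ) - ψ with hv
  have hMv : M (M v) = -v := by
    simp only [hv, map_sub, h4]
    abel
  have h1 : ⟪v, M (M v)⟫ = ⟪M v, M v⟫ := (hM v (M v)).symm
  have h2 : ⟪v, M (M v)⟫ = -⟪v, v⟫ := by rw [hMv, inner_neg_right]
  have h3 : ⟪M v, M v⟫ = -⟪v, v⟫ := by rw [← h1, h2]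
  have h5 : RCLike.re ⟪M v, M v⟫ = -RCLike.re ⟪v, v⟫ := by
    rw [h3, map_neg]
  have h6 : RCLike.re ⟪v, v⟫ = 0 :=
    le_antisymm (by nlinarith [inner_self_nonneg (𝕜 := ℂ) (x := M v)]) (inner_self_nonneg)
  have h7 : ⟪v, v⟫ = 0 := by
    rw [← inner_self_ofReal_re v, h6]; simp
  have : v = 0 := inner_self_eq_zero.mp h7
  exact sub_eq_zero.mp (hv ▸ this)

lemma swap_sq (P Q : H →ₗ[ℂ] H) (hPQ : Commute P Q) (v : H) :
    P (P (Q (Q v))) = Q (Q (P (P v))) := by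
  have h : Commute (P*P) (Q*Q) := (hPQ.mul_left hPQ).mul_right (hPQ.mul_left hPQ)
  have := congrArg (fun f : H →ₗ[ℂ] H => f v) h.eq
  simpa [Module.End.mul_apply] using this


lemma anti_core (X Z : Fin 7 → (H →ₗ[ℂ] H))
    (hherm : ∀ k, (X k).IsSymmetric ∧ (Z k).IsSymmetric)
    (hcomm : ∀ i j, i ≠ j →
      Commute (X i) (X j) ∧ Commute (Z i) (Z j) ∧ Commute (X i) (Z j))
    (t i j k : Fin 7)
    (hti : t ≠ i) (htj : t ≠ j) (htk : t ≠ k) (hij : i ≠ j) (hik : i ≠ k) (hjk : j ≠ k)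
    (haci : X i * Z i + Z i * X i = 0) (hacj : X j * Z j + Z j * X j = 0)
    (hack : X k * Z k + Z k * X k = 0)
    (ψ : H)
    (hfix : ∀ s, X s (X s ψ) = ψ ∧ Z s (Z s ψ) = ψ)
    (hP : (X t * X i * X j * X k) ψ = ψ)
    (hQ : (Z t * Z i * Z j * Z k) ψ = ψ) :
    (X t * Z t + Z t * X t) ψ = 0 := by
  -- commutation helpers
  have cXX : ∀ a b, a ≠ b → Commute (X a) (X b) := fun a b h => (hcomm a b h).1
  have cZZ : ∀ a b, a ≠ b → Commute (Z a) (Z b) := fun a b h => (hcomm a b h).2.1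
  have cXZ : ∀ a b, a ≠ b → Commute (X a) (Z b) := fun a b h => (hcomm a b h).2.2
  have cZX : ∀ a b, a ≠ b → Commute (Z a) (X b) := fun a b h => ((hcomm b a h.symm).2.2).symm
  -- sign facts
  have hi : X i * Z i = -(Z i * X i) := eq_neg_of_add_eq_zero_left haci
  have hj : X j * Z j = -(Z j * X j) := eq_neg_of_add_eq_zero_left hacj
  have hk : X k * Z k = -(Z k * X k) := eq_neg_of_add_eq_zero_left hack
  -- combined stabilizer relations
  have hPQ : ((X t * X i * X j * X k) * (Z t * Z i * Z j * Z k)) ψ = ψ := by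
    rw [Module.End.mul_apply, hQ, hP]
  rw [sort4 _ _ _ _ _ _ _ _ (cZX t i hti) (cZX t j htj) (cZX t k htk)
      (cZX i j hij) (cZX i k hik) (cZX j k hjk), hi, hj, hk] at hPQ
  simp only [neg_mul, mul_neg, neg_neg, LinearMap.neg_apply] at hPQ
  -- hPQ : -(((X t * Z t) * ((Z i * X i) * ((Z j * X j) * (Z k * X k)))) ψ) = ψ
  have h1 : ((X t * Z t) * ((Z i * X i) * ((Z j * X j) * (Z k * X k)))) ψ = -ψ :=
    neg_eq_iff_eq_neg.mp hPQ
  have hQP : ((Z t * Z i * Z j * Z k) * (X t * X i * X j * X k)) ψ = ψ := by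
    rw [Module.End.mul_apply, hP, hQ]
  rw [sort4 _ _ _ _ _ _ _ _ (cXZ t i hti) (cXZ t j htj) (cXZ t k htk)
      (cXZ i j hij) (cXZ i k hik) (cXZ j k hjk)] at hQP
  -- hQP : ((Z t * X t) * ((Z i * X i) * ((Z j * X j) * (Z k * X k)))) ψ = ψ
  have hsum : (((X t * Z t + Z t * X t)) * ((Z i * X i) * ((Z j * X j) * (Z k * X k)))) ψ = 0 := by
    rw [add_mul, LinearMap.add_apply, h1, hQP]
    simp
  -- commute C past D
  have cCt : Commute ((Z i * X i) * ((Z j * X j) * (Z k * X k))) (X t * Z t + Z t * X t) := by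
    have base : ∀ a, a ≠ t → Commute (Z a * X a) (X t * Z t + Z t * X t) := by
      intro a ha
      have h1 : Commute (Z a * X a) (X t) :=
        ((cZX a t ha)).mul_left ((cXX a t ha))
      have h2 : Commute (Z a * X a) (Z t) :=
        ((cZZ a t ha)).mul_left ((cXZ a t ha))
      exact (h1.mul_right h2).add_right (h2.mul_right h1)
    exact (base i hti.symm).mul_left ((base j htj.symm).mul_left (base k htk.symm))
  have hsum2 : (((Z i * X i) * ((Z j * X j) * (Z k * X k))) * (X t * Z t + Z t * X t)) ψ = 0 := by
    rw [cCt.symm.eq] at hsum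
    exact hsum
  simp only [Module.End.mul_apply] at hsum2
  -- hsum2 : Z i (X i (Z j (X j (Z k (X k ((X t * Z t + Z t * X t) ψ)))))) = 0
  set w := (X t * Z t + Z t * X t) ψ with hw
  -- squares fix w
  have sqw : ∀ a, a ≠ t → X a (X a w) = w ∧ Z a (Z a w) = w := by
    intro a ha
    constructor
    · have hc : Commute (X a) (X t * Z t + Z t * X t) :=
        ((cXX a t ha).mul_right (cXZ a t ha)).add_right ((cXZ a t ha).mul_right (cXX a t ha))
      have h2 : Commute (X a * X a) (X t * Z t + Z t * X t) := hc.mul_left hc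
      have h := congrArg (fun f : H →ₗ[ℂ] H => f ψ) h2.eq
      simp only [Module.End.mul_apply] at h
      rw [hw, h, (hfix a).1]
    · have hc : Commute (Z a) (X t * Z t + Z t * X t) :=
        ((cZX a t ha).mul_right (cZZ a t ha)).add_right ((cZZ a t ha).mul_right (cZX a t ha))
      have h2 : Commute (Z a * Z a) (X t * Z t + Z t * X t) := hc.mul_left hc
      have h := congrArg (fun f : H →ₗ[ℂ] H => f ψ) h2.eq
      simp only [Module.End.mul_apply] at h
      rw [hw, h, (hfix a).2]
  -- build the square-fixing facts up the chain
  obtain ⟨fXk, fZk⟩ := sqw k htk.symm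
  obtain ⟨fXj, fZj⟩ := sqw j htj.symm
  obtain ⟨fXi, fZi⟩ := sqw i hti.symm
  have fXj1 : X j (X j (X k w)) = X k w := pushfix _ _ _ (cXX j k hjk) fXj
  have fXj2 : X j (X j (Z k (X k w))) = Z k (X k w) := pushfix _ _ _ (cXZ j k hjk) fXj1
  have fZj1 : Z j (Z j (X k w)) = X k w := pushfix _ _ _ (cZX j k hjk) fZj
  have fZj2 : Z j (Z j (Z k (X k w))) = Z k (X k w) := pushfix _ _ _ (cZZ j k hjk) fZj1
  have fXi1 : X i (X i (X k w)) = X k w := pushfix _ _ _ (cXX i k hik) fXi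
  have fXi2 : X i (X i (Z k (X k w))) = Z k (X k w) := pushfix _ _ _ (cXZ i k hik) fXi1
  have fXi3 : X i (X i (X j (Z k (X k w)))) = X j (Z k (X k w)) :=
    pushfix _ _ _ (cXX i j hij) fXi2
  have fXi4 : X i (X i (Z j (X j (Z k (X k w))))) = Z j (X j (Z k (X k w))) :=
    pushfix _ _ _ (cXZ i j hij) fXi3
  have fZi1 : Z i (Z i (X k w)) = X k w := pushfix _ _ _ (cZX i k hik) fZi
  have fZi2 : Z i (Z i (Z k (X k w))) = Z k (X k w) := pushfix _ _ _ (cZZ i k hik) fZi1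
  have fZi3 : Z i (Z i (X j (Z k (X k w)))) = X j (Z k (X k w)) :=
    pushfix _ _ _ (cZX i j hij) fZi2
  have fZi4 : Z i (Z i (Z j (X j (Z k (X k w))))) = Z j (X j (Z k (X k w))) :=
    pushfix _ _ _ (cZZ i j hij) fZi3
  -- norm chain
  have stk : ⟪Z k (X k w), Z k (X k w)⟫ = ⟪w, w⟫ :=
    step (X k) (Z k) (hherm k).1 (hherm k).2 hack w fXk fZk
  have stj : ⟪Z j (X j (Z k (X k w))), Z j (X j (Z k (X k w)))⟫ = ⟪Z k (X k w), Z k (X k w)⟫ :=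
    step (X j) (Z j) (hherm j).1 (hherm j).2 hacj _ fXj2 fZj2
  have sti : ⟪Z i (X i (Z j (X j (Z k (X k w))))), Z i (X i (Z j (X j (Z k (X k w)))))⟫
      = ⟪Z j (X j (Z k (X k w))), Z j (X j (Z k (X k w)))⟫ :=
    step (X i) (Z i) (hherm i).1 (hherm i).2 haci _ fXi4 fZi4
  have hww : ⟪w, w⟫ = (0 : ℂ) := by
    rw [← stk, ← stj, ← sti, hsum2]
    simp
  exact inner_self_eq_zero.mp hww

lemma squares_fix (W : Fin 7 → (H →ₗ[ℂ] H)) (hsym : ∀ s, (W s).IsSymmetric)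
    (hc : ∀ i j : Fin 7, i ≠ j → Commute (W i) (W j))
    (h0 : W 0 * W 0 = 1) (h3 : W 3 * W 3 = 1) (h5 : W 5 * W 5 = 1)
    (ψ : H)
    (hA : (W 3 * W 4 * W 5 * W 6) ψ = ψ) (hB : (W 1 * W 2 * W 5 * W 6) ψ = ψ)
    (hC : (W 0 * W 2 * W 4 * W 6) ψ = ψ) (hD : (W 0 * W 1 * W 4 * W 5) ψ = ψ) :
    ∀ s, W s (W s ψ) = ψ := by
  have hAA : ((W 3 * W 4 * W 5 * W 6) * (W 3 * W 4 * W 5 * W 6)) ψ = ψ := by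
    rw [Module.End.mul_apply, hA, hA]
  rw [sort4 _ _ _ _ _ _ _ _ (hc 3 4 (by decide)) (hc 3 5 (by decide)) (hc 3 6 (by decide))
    (hc 4 5 (by decide)) (hc 4 6 (by decide)) (hc 5 6 (by decide)), h3, h5] at hAA
  simp only [one_mul, Module.End.mul_apply] at hAA
  -- hAA : W 4 (W 4 (W 6 (W 6 ψ))) = ψ
  have hCC : ((W 0 * W 2 * W 4 * W 6) * (W 0 * W 2 * W 4 * W 6)) ψ = ψ := by
    rw [Module.End.mul_apply, hC, hC]
  rw [sort4 _ _ _ _ _ _ _ _ (hc 0 2 (by decide)) (hc 0 4 (by decide)) (hc 0 6 (by decide))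
    (hc 2 4 (by decide)) (hc 2 6 (by decide)) (hc 4 6 (by decide)), h0] at hCC
  simp only [one_mul, Module.End.mul_apply] at hCC
  rw [hAA] at hCC
  -- hCC : W 2 (W 2 ψ) = ψ
  have hBB : ((W 1 * W 2 * W 5 * W 6) * (W 1 * W 2 * W 5 * W 6)) ψ = ψ := by
    rw [Module.End.mul_apply, hB, hB]
  rw [sort4 _ _ _ _ _ _ _ _ (hc 1 2 (by decide)) (hc 1 5 (by decide)) (hc 1 6 (by decide))
    (hc 2 5 (by decide)) (hc 2 6 (by decide)) (hc 5 6 (by decide)), h5] at hBB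
  simp only [one_mul, Module.End.mul_apply] at hBB
  -- hBB : W 1 (W 1 (W 2 (W 2 (W 6 (W 6 ψ))))) = ψ
  have hsw26 : W 2 (W 2 (W 6 (W 6 ψ))) = W 6 (W 6 ψ) := by
    rw [swap_sq _ _ (hc 2 6 (by decide)), hCC]
  rw [hsw26] at hBB
  -- hBB : W 1 (W 1 (W 6 (W 6 ψ))) = ψ
  have hDD : ((W 0 * W 1 * W 4 * W 5) * (W 0 * W 1 * W 4 * W 5)) ψ = ψ := by
    rw [Module.End.mul_apply, hD, hD]
  rw [sort4 _ _ _ _ _ _ _ _ (hc 0 1 (by decide)) (hc 0 4 (by decide)) (hc 0 5 (by decide))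
    (hc 1 4 (by decide)) (hc 1 5 (by decide)) (hc 4 5 (by decide)), h0, h5] at hDD
  simp only [one_mul, mul_one, Module.End.mul_apply] at hDD
  -- hDD : W 1 (W 1 (W 4 (W 4 ψ))) = ψ
  -- triple trick: A = W1², B = W4², C = W6²
  have hABC1 : W 1 (W 1 (W 4 (W 4 (W 6 (W 6 ψ))))) = W 1 (W 1 ψ) :=
    congrArg (fun v => W 1 (W 1 v)) hAA
  have hAB : W 1 (W 1 ψ) = W 4 (W 4 ψ) := by
    have h := congrArg (fun v => W 4 (W 4 v)) hBB
    rw [swap_sq _ _ (hc 4 1 (by decide)), hABC1] at h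
    exact h
  have hAC : W 1 (W 1 ψ) = W 6 (W 6 ψ) := by
    have h := congrArg (fun v => W 6 (W 6 v)) hDD
    rw [swap_sq _ _ (hc 6 1 (by decide)), swap_sq _ _ (hc 6 4 (by decide)), hABC1] at h
    exact h
  have h14 : W 1 (W 1 (W 1 (W 1 ψ))) = ψ := by
    rw [hAB]; exact hDD
  have s1 : W 1 (W 1 ψ) = ψ := psd_fix (W 1) (hsym 1) ψ h14
  have s4 : W 4 (W 4 ψ) = ψ := hAB ▸ s1
  have s6 : W 6 (W 6 ψ) = ψ := hAC ▸ s1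
  have s0 : W 0 (W 0 ψ) = ψ := by
    have := congrArg (fun f : H →ₗ[ℂ] H => f ψ) h0
    simpa [Module.End.mul_apply] using this
  have s3 : W 3 (W 3 ψ) = ψ := by
    have := congrArg (fun f : H →ₗ[ℂ] H => f ψ) h3
    simpa [Module.End.mul_apply] using this
  have s5 : W 5 (W 5 ψ) = ψ := by
    have := congrArg (fun f : H →ₗ[ℂ] H => f ψ) h5
    simpa [Module.End.mul_apply] using this
  intro s
  fin_cases s <;> assumption

end psd

/-- Algebraic core of self-testing the Steane `[[7,1,3]]` code: the eight (substituted)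
stabilizer-type conditions, with squaring relations at sites 1, 4, 6 and anticommutation at
sites 2, 3, 5, 7, imply `Xₖ²ψ = Zₖ²ψ = ψ` and `{Xₖ,Zₖ}ψ = 0` for all `k = 1,…,7`. -/
theorem stmt_10 {H : Type*} [NormedAddCommGroup H] [InnerProductSpace ℂ H]
    [FiniteDimensional ℂ H]
    (X Z : Fin 7 → (H →ₗ[ℂ] H))
    (hherm : ∀ k, (X k).IsSymmetric ∧ (Z k).IsSymmetric)
    (hcomm : ∀ i j, i ≠ j →
      Commute (X i) (X j) ∧ Commute (Z i) (Z j) ∧ Commute (X i) (Z j))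
    (hsq : ∀ k, k ∈ ({0, 3, 5} : Set (Fin 7)) → (X k) ^ 2 = 1 ∧ (Z k) ^ 2 = 1)
    (hac : ∀ k, k ∈ ({1, 2, 4, 6} : Set (Fin 7)) → X k * Z k + Z k * X k = 0)
    (ψ : H)
    (hS1 : (X 3 * X 4 * X 5 * X 6) ψ = ψ)
    (hS2 : (X 1 * X 2 * X 5 * X 6) ψ = ψ)
    (hS3 : (X 0 * X 2 * X 4 * X 6) ψ = ψ)
    (hS4 : (X 0 * X 1 * X 4 * X 5) ψ = ψ)
    (hS5 : (Z 3 * Z 4 * Z 5 * Z 6) ψ = ψ)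
    (hS6 : (Z 1 * Z 2 * Z 5 * Z 6) ψ = ψ)
    (hS7 : (Z 0 * Z 2 * Z 4 * Z 6) ψ = ψ)
    (hS8 : (Z 0 * Z 1 * Z 4 * Z 5) ψ = ψ) :
    ∀ k, ((X k) ^ 2) ψ = ψ ∧ ((Z k) ^ 2) ψ = ψ ∧ (X k * Z k + Z k * X k) ψ = 0 := by
  have cXX : ∀ a b, a ≠ b → Commute (X a) (X b) := fun a b h => (hcomm a b h).1
  have cZZ : ∀ a b, a ≠ b → Commute (Z a) (Z b) := fun a b h => (hcomm a b h).2.1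
  have hX0 : X 0 * X 0 = 1 := by rw [← pow_two]; exact (hsq 0 (by simp)).1
  have hX3 : X 3 * X 3 = 1 := by rw [← pow_two]; exact (hsq 3 (by simp)).1
  have hX5 : X 5 * X 5 = 1 := by rw [← pow_two]; exact (hsq 5 (by simp)).1
  have hZ0 : Z 0 * Z 0 = 1 := by rw [← pow_two]; exact (hsq 0 (by simp)).2
  have hZ3 : Z 3 * Z 3 = 1 := by rw [← pow_two]; exact (hsq 3 (by simp)).2
  have hZ5 : Z 5 * Z 5 = 1 := by rw [← pow_two]; exact (hsq 5 (by simp)).2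
  have sqX : ∀ s, X s (X s ψ) = ψ :=
    squares_fix X (fun s => (hherm s).1) cXX hX0 hX3 hX5 ψ hS1 hS2 hS3 hS4
  have sqZ : ∀ s, Z s (Z s ψ) = ψ :=
    squares_fix Z (fun s => (hherm s).2) cZZ hZ0 hZ3 hZ5 ψ hS5 hS6 hS7 hS8
  have hfix : ∀ s, X s (X s ψ) = ψ ∧ Z s (Z s ψ) = ψ := fun s => ⟨sqX s, sqZ s⟩
  -- anticommutation at site 0
  have hanti0 : (X 0 * Z 0 + Z 0 * X 0) ψ = 0 :=
    anti_core X Z hherm hcomm 0 2 4 6 (by decide) (by decide) (by decide) (by decide)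
      (by decide) (by decide) (hac 2 (by simp)) (hac 4 (by simp)) (hac 6 (by simp))
      ψ hfix hS3 hS7
  -- anticommutation at site 5 (reorder hS2 / hS6)
  have hP5 : (X 5 * X 1 * X 2 * X 6) ψ = ψ := by
    have e : X 5 * X 1 * X 2 * X 6 = X 1 * X 2 * X 5 * X 6 := by
      rw [(cXX 5 1 (by decide)).eq, mul_assoc (X 1) (X 5) (X 2),
        (cXX 5 2 (by decide)).eq, ← mul_assoc]
    rw [e]; exact hS2
  have hQ5 : (Z 5 * Z 1 * Z 2 * Z 6) ψ = ψ := by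
    have e : Z 5 * Z 1 * Z 2 * Z 6 = Z 1 * Z 2 * Z 5 * Z 6 := by
      rw [(cZZ 5 1 (by decide)).eq, mul_assoc (Z 1) (Z 5) (Z 2),
        (cZZ 5 2 (by decide)).eq, ← mul_assoc]
    rw [e]; exact hS6
  have hanti5 : (X 5 * Z 5 + Z 5 * X 5) ψ = 0 :=
    anti_core X Z hherm hcomm 5 1 2 6 (by decide) (by decide) (by decide) (by decide)
      (by decide) (by decide) (hac 1 (by simp)) (hac 2 (by simp)) (hac 6 (by simp))
      ψ hfix hP5 hQ5
  -- anticommutation at site 3 (effective stabilizers from products)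
  have hP3 : (X 3 * X 1 * X 4 * X 2) ψ = ψ := by
    have h12 : ((X 3 * X 4 * X 5 * X 6) * (X 1 * X 2 * X 5 * X 6)) ψ = ψ := by
      rw [Module.End.mul_apply, hS2, hS1]
    rw [sort4 _ _ _ _ _ _ _ _ (cXX 1 4 (by decide)) (cXX 1 5 (by decide))
      (cXX 1 6 (by decide)) (cXX 2 5 (by decide)) (cXX 2 6 (by decide))
      (cXX 5 6 (by decide)), hX5] at h12
    simp only [one_mul, Module.End.mul_apply] at h12
    rw [sqX 6] at h12
    simp only [Module.End.mul_apply]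
    exact h12
  have hQ3 : (Z 3 * Z 1 * Z 4 * Z 2) ψ = ψ := by
    have h12 : ((Z 3 * Z 4 * Z 5 * Z 6) * (Z 1 * Z 2 * Z 5 * Z 6)) ψ = ψ := by
      rw [Module.End.mul_apply, hS6, hS5]
    rw [sort4 _ _ _ _ _ _ _ _ (cZZ 1 4 (by decide)) (cZZ 1 5 (by decide))
      (cZZ 1 6 (by decide)) (cZZ 2 5 (by decide)) (cZZ 2 6 (by decide))
      (cZZ 5 6 (by decide)), hZ5] at h12
    simp only [one_mul, Module.End.mul_apply] at h12
    rw [sqZ 6] at h12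
    simp only [Module.End.mul_apply]
    exact h12
  have hanti3 : (X 3 * Z 3 + Z 3 * X 3) ψ = 0 :=
    anti_core X Z hherm hcomm 3 1 4 2 (by decide) (by decide) (by decide) (by decide)
      (by decide) (by decide) (hac 1 (by simp)) (hac 4 (by simp)) (hac 2 (by simp))
      ψ hfix hP3 hQ3
  intro k
  refine ⟨?_, ?_, ?_⟩
  · rw [pow_two, Module.End.mul_apply]; exact sqX k
  · rw [pow_two, Module.End.mul_apply]; exact sqZ k
  · fin_cases k
    · exact hanti0
    · exact (congrArg (fun f : H →ₗ[ℂ] H => f ψ) (hac 1 (by simp))).trans rfl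
    · exact (congrArg (fun f : H →ₗ[ℂ] H => f ψ) (hac 2 (by simp))).trans rfl
    · exact hanti3
    · exact (congrArg (fun f : H →ₗ[ℂ] H => f ψ) (hac 4 (by simp))).trans rfl
    · exact hanti5
    · exact (congrArg (fun f : H →ₗ[ℂ] H => f ψ) (hac 6 (by simp))).trans rfl
end
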